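/- Let H be a complex Hilbert space with two equivalent inner products ⟨·,·⟩ and ⟨·,·⟩' satisfying e^{−c}‖v‖² ≤ ‖v‖'² ≤ e^{c}‖v‖² for all v, for some constant c > 0. Let X be a closed subspace and T a nonzero bounded linear functional on X. Let S be the unit vector (w.r.t. ‖·‖) in X with T(S) = ‖T|_X‖, and S' the unit vector (w.r.t. ‖·‖') in X with T(S') = ‖T|_X‖'. Then e^{−c/2} T(S') ≤ T(S) ≤ e^{c/2} T(S') and ‖S − S'‖² ≤ e^{c} − e^{−c}. -/

import Mathlib

set_option maxHeartbeats 1000000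

lemma stmt2_poly (E r : ℝ) (hE : 1 ≤ E) (hr : 0 ≤ r) :
    (E + 1 - 2*r*E) * ((E*E - 1) * r^2) ≤ E * (E - r^2)^2 := by
  have hid : E * (E - r^2)^2 - (E + 1 - 2*r*E) * ((E*E - 1) * r^2)
      = (r-1)^2*(r+1)^2
        + (E-1)*(r^2*(E-1)*(2*E+1) + (r-1)^2*((2*r+1)*(E^2+E+1)+r^2)) := by
    ring
  have t1 : (0:ℝ) ≤ E - 1 := by linarith
  have h2 : (0:ℝ) ≤ r^2*(E-1)*(2*E+1) :=
    mul_nonneg (mul_nonneg (sq_nonneg r) t1) (by linarith)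
  have h3 : (0:ℝ) ≤ (r-1)^2*((2*r+1)*(E^2+E+1)+r^2) := by
    have : (0:ℝ) ≤ (2*r+1)*(E^2+E+1) :=
      mul_nonneg (by linarith) (by nlinarith [sq_nonneg E])
    exact mul_nonneg (sq_nonneg _) (by nlinarith [sq_nonneg r])
  nlinarith [mul_nonneg (sq_nonneg (r-1)) (sq_nonneg (r+1)),
    mul_nonneg t1 (by linarith [h2, h3] :
      (0:ℝ) ≤ r^2*(E-1)*(2*E+1) + (r-1)^2*((2*r+1)*(E^2+E+1)+r^2))]

lemma stmt2_tau (r b2 t : ℝ) (hr : 0 < r)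
    (hk : ∀ lam : ℝ, 0 ≤ lam → (1 + lam*r)^2 ≤ r^2*(b2 + 2*lam*t + lam^2)) :
    1 ≤ r * t := by
  have hb2r : 1 ≤ r^2*b2 := by have := hk 0 le_rfl; nlinarith [this]
  by_contra h
  push_neg at h
  have ha : 0 < r - r^2*t := by nlinarith
  have hb2pos : (0:ℝ) < r^2*b2 := by linarith
  have hlam0 : 0 ≤ (r^2*b2) / (2*(r - r^2*t)) :=
    div_nonneg hb2pos.le (by linarith)
  have hkk := hk ((r^2*b2) / (2*(r - r^2*t))) hlam0
  have h2 : 2*((r^2*b2) / (2*(r - r^2*t)))*(r - r^2*t) = r^2*b2 := by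
    field_simp
  nlinarith [hkk, h2]

lemma stmt2_arith (E r s b2 t : ℝ) (hE : 1 < E) (hr : 0 < r) (hr2s : r^2 ≤ s)
    (hsE : s ≤ E) (hb2E : b2 ≤ E) (hrt : 1 ≤ r*t)
    (hquad : (r-E*t)^2 + 2*((r-E*t)*(E^2-1))*r + (E^2-1)^2*s
      ≤ E*((r-E*t)^2*b2 + 2*((r-E*t)*(E^2-1))*t + (E^2-1)^2)) :
    1 + s - 2*r ≤ E - E⁻¹ := by
  have hE0 : (0:ℝ) < E := by linarith
  have hA : (r-E*t)^2 + 2*((r-E*t)*(E^2-1))*r + (E^2-1)^2*s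
      ≤ E*((r-E*t)^2*E + 2*((r-E*t)*(E^2-1))*t + (E^2-1)^2) := by
    have h2 : (r-E*t)^2*b2 ≤ (r-E*t)^2*E :=
      mul_le_mul_of_nonneg_left hb2E (sq_nonneg _)
    nlinarith [hquad, h2, hE0]
  have hfac : E*((r-E*t)^2*E + 2*((r-E*t)*(E^2-1))*t + (E^2-1)^2)
      - ((r-E*t)^2 + 2*((r-E*t)*(E^2-1))*r + (E^2-1)^2*s)
      = (E^2-1)*((E^2-1)*(E-s) - (E*t-r)^2) := by ring
  have hE2 : 0 < E^2 - 1 := by nlinarith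
  have hkey2 : (E*t - r)^2 ≤ (E^2-1)*(E-s) := by
    have hZ : 0 ≤ (E^2-1)*((E^2-1)*(E-s) - (E*t-r)^2) := by linarith
    by_contra hcon
    push_neg at hcon
    nlinarith [hZ, hE2, hcon]
  have hEr2 : r^2 ≤ E := le_trans hr2s hsE
  have hq : E - r^2 ≤ r*(E*t - r) := by nlinarith [hrt, hE0]
  have hq0 : 0 ≤ E - r^2 := by linarith
  have hkey3 : (E - r^2)^2 ≤ (E^2-1)*(E-s)*r^2 := by
    have h1 : (E - r^2)^2 ≤ (r*(E*t - r))^2 := by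
      apply pow_le_pow_left₀ hq0 hq
    nlinarith [hkey2, sq_nonneg r, h1]
  have hpoly := stmt2_poly E r hE.le hr.le
  have hpos : 0 < (E*E - 1)*r^2 := by nlinarith [sq_nonneg r, hr]
  have hlin : E + 1 - 2*r*E ≤ E*(E - s) := by
    have hchain : (E + 1 - 2*r*E) * ((E*E-1)*r^2) ≤ (E*(E-s)) * ((E*E-1)*r^2) := by
      calc (E + 1 - 2*r*E) * ((E*E-1)*r^2) ≤ E * (E - r^2)^2 := hpoly
      _ ≤ E * ((E^2-1)*(E-s)*r^2) := mul_le_mul_of_nonneg_left hkey3 hE0.le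
      _ = (E*(E-s)) * ((E*E-1)*r^2) := by ring
    exact le_of_mul_le_mul_right hchain hpos
  have hEinv : E * E⁻¹ = 1 := mul_inv_cancel₀ hE0.ne'
  have h1 : E*(1 + s - 2*r) ≤ E*(E - E⁻¹) := by nlinarith [hlin, hEinv]
  exact le_of_mul_le_mul_left h1 hE0

/-- comparison of peak sections for two equivalent inner products.
`H` is a complex Hilbert space with inner product `⟪·,·⟫` (giving the norm `‖·‖`), and
`B` is a second inner product on `H` satisfying `e^(−c)‖v‖² ≤ (B v v).re ≤ e^c ‖v‖²`.
`X` is a closed subspace and `T` a bounded linear functional.  `S` is the peak section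
of `T` on `X` for `⟪·,·⟫` (a unit vector on which `Re T` is maximal among unit vectors
of `X`, with `T S` real positive, and `S ⟂ ker T ∩ X`), and `S'` is the peak section
of `T` on `X` for `B`.  Then `e^(−c/2) T(S') ≤ T(S) ≤ e^(c/2) T(S')` and
`‖S − S'‖² ≤ e^c − e^(−c)`. -/
theorem stmt_2 {H : Type*} [NormedAddCommGroup H] [InnerProductSpace ℂ H]
    [CompleteSpace H] (X : Submodule ℂ H) (hXc : IsClosed (X : Set H))
    (B : H → H → ℂ)
    (hB_add : ∀ x y z : H, B (x + y) z = B x z + B y z)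
    (hB_smul : ∀ (a : ℂ) (x y : H), B (a • x) y = a * B x y)
    (hB_conj : ∀ x y : H, B y x = (starRingEnd ℂ) (B x y))
    (c : ℝ) (hc : 0 < c)
    (hlow : ∀ v : H, Real.exp (-c) * ‖v‖ ^ 2 ≤ (B v v).re)
    (hup : ∀ v : H, (B v v).re ≤ Real.exp c * ‖v‖ ^ 2)
    (T : H →L[ℂ] ℂ) (S S' : H) (hS : S ∈ X) (hS' : S' ∈ X)
    (hSnorm : ‖S‖ = 1) (hS'norm : (B S' S').re = 1)
    (hSre : 0 < (T S).re) (hSim : (T S).im = 0)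
    (hS're : 0 < (T S').re) (hS'im : (T S').im = 0)
    (hSmax : ∀ v ∈ X, ‖v‖ = 1 → (T v).re ≤ (T S).re)
    (hS'max : ∀ v ∈ X, (B v v).re = 1 → (T v).re ≤ (T S').re)
    (hSorth : ∀ v ∈ X, T v = 0 → (inner ℂ S v : ℂ) = 0) :
    Real.exp (-(c / 2)) * (T S').re ≤ (T S).re ∧
      (T S).re ≤ Real.exp (c / 2) * (T S').re ∧
      ‖S - S'‖ ^ 2 ≤ Real.exp c - Real.exp (-c) := by
  obtain ⟨E, hEdef⟩ : ∃ E : ℝ, E = Real.exp c := ⟨_, rfl⟩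
  obtain ⟨d, hddef⟩ : ∃ d : ℝ, d = Real.exp (c/2) := ⟨_, rfl⟩
  have hE1 : 1 < E := by rw [hEdef]; exact Real.one_lt_exp_iff.mpr hc
  have hE0 : (0:ℝ) < E := by linarith
  have hd0 : 0 < d := by rw [hddef]; exact Real.exp_pos _
  have hd2 : d^2 = E := by
    rw [hddef, hEdef, pow_two, ← Real.exp_add]
    norm_num
  simp only [Real.exp_neg, ← hEdef] at hlow hup
  simp only [Real.exp_neg, ← hEdef, ← hddef]
  -- derived sesquilinearity facts
  have hB_conj' : ∀ x y : H, B x y = (starRingEnd ℂ) (B y x) := fun x y => hB_conj y x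
  have hB_addr : ∀ z x y : H, B z (x+y) = B z x + B z y := by
    intro z x y
    rw [hB_conj' z (x+y), hB_add, map_add, ← hB_conj' z x, ← hB_conj' z y]
  have hB_smulr : ∀ (a : ℂ) (z x : H), B z (a • x) = (starRingEnd ℂ) a * B z x := by
    intro a z x
    rw [hB_conj' z (a • x), hB_smul, map_mul, ← hB_conj' z x]
  have hBexp : ∀ (x y : ℝ) (u w : H),
      (B ((x:ℂ)•u + (y:ℂ)•w) ((x:ℂ)•u + (y:ℂ)•w)).re
        = x^2*(B u u).re + 2*(x*y)*(B u w).re + y^2*(B w w).re := by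
    intro x y u w
    have hwu : (B w u).re = (B u w).re := by
      rw [hB_conj' w u]; simp
    rw [hB_add, hB_addr, hB_addr, hB_smul, hB_smul, hB_smulr, hB_smulr,
      hB_smulr, hB_smulr, hB_smul, hB_smul]
    simp only [Complex.add_re, Complex.conj_ofReal, ← Complex.ofReal_mul,
      Complex.re_ofReal_mul, hwu]
    ring
  have hBsq : ∀ (a : ℝ) (v : H), (B ((a:ℂ)•v) ((a:ℂ)•v)).re = a^2 * (B v v).re := by
    intro a v
    rw [hB_smul, hB_smulr]
    simp only [Complex.conj_ofReal, ← Complex.ofReal_mul, Complex.re_ofReal_mul]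
    ring
  -- T S is nonzero
  have hTSne : T S ≠ 0 := by
    intro h
    rw [h] at hSre
    simp at hSre
  obtain ⟨r, hrdef⟩ : ∃ r : ℝ, r = (T S').re / (T S).re := ⟨_, rfl⟩
  have hr0 : 0 < r := hrdef ▸ div_pos hS're hSre
  have hrTS : (T S').re = r * (T S).re := by
    rw [hrdef]; field_simp
  -- the inner product ⟪S, S'⟫ equals r
  have hinner : (inner ℂ S S' : ℂ) = (r : ℂ) := by
    have hvX : S' - (T S' / T S) • S ∈ X := X.sub_mem hS' (X.smul_mem _ hS)
    have hTv : T (S' - (T S' / T S) • S) = 0 := by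
      rw [map_sub, map_smul, smul_eq_mul, div_mul_cancel₀ _ hTSne, sub_self]
    have h0 := hSorth _ hvX hTv
    rw [inner_sub_right, inner_smul_right, inner_self_eq_norm_sq_to_K, hSnorm] at h0
    have h1 : (inner ℂ S S' : ℂ) = T S' / T S := by
      push_cast at h0
      linear_combination h0
    rw [h1]
    have hTSr : T S = ((T S).re : ℂ) := Complex.ext rfl (by simpa using hSim)
    have hTS'r : T S' = ((T S').re : ℂ) := Complex.ext rfl (by simpa using hS'im)
    rw [hTSr, hTS'r, hrdef]
    push_cast
    rfl
  have hr_re : (RCLike.re (inner ℂ S S' : ℂ) : ℝ) = r := by rw [hinner]; simp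
  have hs_le : ‖S'‖^2 ≤ E := by
    have h := hlow S'
    rw [hS'norm] at h
    calc ‖S'‖^2 = E * (E⁻¹ * ‖S'‖^2) := by field_simp
    _ ≤ E * 1 := mul_le_mul_of_nonneg_left h hE0.le
    _ = E := mul_one E
  have hr2s : r^2 ≤ ‖S'‖^2 := by
    have h1 : r ≤ ‖S'‖ := by
      calc r = (inner ℂ S S' : ℂ).re := by rw [hinner]; simp
      _ ≤ ‖(inner ℂ S S' : ℂ)‖ := Complex.re_le_norm _
      _ = ‖(inner ℂ S S' : ℂ)‖ := rfl
      _ ≤ ‖S‖ * ‖S'‖ := norm_inner_le_norm S S'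
      _ = ‖S'‖ := by rw [hSnorm, one_mul]
    exact pow_le_pow_left₀ hr0.le h1 2
  have hb2E : (B S S).re ≤ E := by
    have := hup S
    rwa [hSnorm, one_pow, mul_one] at this
  -- normalized maximality for B
  have hmax' : ∀ v ∈ X, 0 < (B v v).re →
      (T v).re ≤ Real.sqrt ((B v v).re) * (T S').re := by
    intro v hvX hBv
    have hg0 : 0 < Real.sqrt ((B v v).re) := Real.sqrt_pos.mpr hBv
    have hg2 : (Real.sqrt ((B v v).re))^2 = (B v v).re := Real.sq_sqrt hBv.le
    have hwX : (((Real.sqrt ((B v v).re))⁻¹ : ℝ) : ℂ) • v ∈ X := X.smul_mem _ hvX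
    have hBw : (B ((((Real.sqrt ((B v v).re))⁻¹ : ℝ) : ℂ) • v)
        ((((Real.sqrt ((B v v).re))⁻¹ : ℝ) : ℂ) • v)).re = 1 := by
      rw [hBsq, ← hg2]
      field_simp
      rw [Real.sqrt_sq hg0.le]
    have h := hS'max _ hwX hBw
    rw [map_smul, smul_eq_mul, Complex.re_ofReal_mul] at h
    calc (T v).re
        = Real.sqrt ((B v v).re) * ((Real.sqrt ((B v v).re))⁻¹ * (T v).re) := by
          field_simp
    _ ≤ Real.sqrt ((B v v).re) * (T S').re := mul_le_mul_of_nonneg_left h hg0.le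
  -- the key one-parameter family of inequalities
  have hkey : ∀ lam : ℝ, 0 ≤ lam →
      (1 + lam*r)^2 ≤ r^2 * ((B S S).re + 2*lam*(B S S').re + lam^2) := by
    intro lam hlam
    have hvX : S + (lam:ℂ) • S' ∈ X := X.add_mem hS (X.smul_mem _ hS')
    have hv1 : S + (lam:ℂ) • S' = ((1:ℝ):ℂ)•S + ((lam:ℝ):ℂ)•S' := by
      push_cast; rw [one_smul]
    have hBv : (B (S + (lam:ℂ) • S') (S + (lam:ℂ) • S')).re
        = (B S S).re + 2*lam*(B S S').re + lam^2 := by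
      rw [hv1, hBexp, hS'norm]
      ring
    have hTv : (T (S + (lam:ℂ) • S')).re = (T S).re * (1 + lam*r) := by
      rw [map_add, map_smul, smul_eq_mul]
      rw [Complex.add_re, Complex.re_ofReal_mul, hrTS]
      ring
    have hTvpos : 0 < (T (S + (lam:ℂ) • S')).re := by
      rw [hTv]
      have h1 : 0 < 1 + lam*r := by positivity
      positivity
    have hBvpos : 0 < (B (S + (lam:ℂ) • S') (S + (lam:ℂ) • S')).re := by
      rcases eq_or_ne (S + (lam:ℂ) • S') 0 with h | h
      · exfalso
        rw [h] at hTvpos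
        simp at hTvpos
      · have hn : 0 < ‖S + (lam:ℂ) • S'‖ := norm_pos_iff.mpr h
        have h3 := hlow (S + (lam:ℂ) • S')
        have h2 : 0 < E⁻¹ * ‖S + (lam:ℂ) • S'‖^2 := by positivity
        linarith
    have h := hmax' _ hvX hBvpos
    have hs2 : ((T (S + (lam:ℂ) • S')).re)^2
        ≤ (B (S + (lam:ℂ) • S') (S + (lam:ℂ) • S')).re * ((T S').re)^2 := by
      have hsq := mul_le_mul h h hTvpos.le
        (mul_nonneg (Real.sqrt_nonneg _) hS're.le)
      calc ((T (S + (lam:ℂ) • S')).re)^2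
          = (T (S + (lam:ℂ) • S')).re * (T (S + (lam:ℂ) • S')).re := by ring
      _ ≤ (Real.sqrt ((B (S + (lam:ℂ) • S') (S + (lam:ℂ) • S')).re) * (T S').re)
            * (Real.sqrt ((B (S + (lam:ℂ) • S') (S + (lam:ℂ) • S')).re) * (T S').re) := hsq
      _ = (Real.sqrt ((B (S + (lam:ℂ) • S') (S + (lam:ℂ) • S')).re))^2 * ((T S').re)^2 := by
            ring
      _ = (B (S + (lam:ℂ) • S') (S + (lam:ℂ) • S')).re * ((T S').re)^2 := by
            rw [Real.sq_sqrt hBvpos.le]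
    rw [hTv, hBv, hrTS] at hs2
    have hTT : 0 < ((T S).re)^2 := by positivity
    nlinarith [hs2, hTT]
  have hτr : 1 ≤ r * (B S S').re := stmt2_tau r (B S S).re (B S S').re hr0 hkey
  have hb2r : 1 ≤ r^2 * (B S S).re := by
    have := hkey 0 le_rfl
    nlinarith [this]
  -- Part 1
  have hrd : r ≤ d := by nlinarith [hr2s, hs_le, hd2]
  have h1d : 1 ≤ r * d := by nlinarith [hb2r, hb2E, hd2, mul_pos hr0 hd0]
  refine ⟨?_, ?_, ?_⟩
  · -- d⁻¹ * (T S').re ≤ (T S).re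
    rw [hrTS]
    have hdd : d⁻¹ * d = 1 := inv_mul_cancel₀ hd0.ne'
    calc d⁻¹ * (r * (T S).re) ≤ d⁻¹ * (d * (T S).re) := by
          apply mul_le_mul_of_nonneg_left _ (inv_nonneg.mpr hd0.le)
          exact mul_le_mul_of_nonneg_right hrd hSre.le
    _ = (T S).re := by rw [← mul_assoc, hdd, one_mul]
  · -- (T S).re ≤ d * (T S').re
    rw [hrTS]
    nlinarith [h1d, hSre]
  · -- the norm bound
    have hNexp : ∀ x y : ℝ, ‖(x:ℂ)•S + (y:ℂ)•S'‖^2 = x^2 + 2*(x*y)*r + y^2*‖S'‖^2 := by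
      intro x y
      rw [@norm_add_sq ℂ, inner_smul_left, inner_smul_right, hinner, norm_smul, norm_smul,
        hSnorm]
      simp only [Complex.conj_ofReal, ← Complex.ofReal_mul, RCLike.re_to_complex,
        Complex.ofReal_re, Complex.norm_real, Real.norm_eq_abs, mul_one]
      ring_nf
      rw [sq_abs, sq_abs]
      ring
    have hns : ‖S - S'‖^2 = 1 - 2*r + ‖S'‖^2 := by
      rw [@norm_sub_sq ℂ, hSnorm, hr_re]
      norm_num
    -- the quadratic inequality from hlow at x•S + y•S'
    have hlv2 := hlow (((r - E*(B S S').re : ℝ):ℂ)•S + ((E^2-1 : ℝ):ℂ)•S')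
    rw [hNexp, hBexp, hS'norm] at hlv2
    have hquad : (r-E*(B S S').re)^2 + 2*((r-E*(B S S').re)*(E^2-1))*r + (E^2-1)^2*‖S'‖^2
        ≤ E*((r-E*(B S S').re)^2*(B S S).re + 2*((r-E*(B S S').re)*(E^2-1))*(B S S').re
            + (E^2-1)^2) := by
      have h2 := mul_le_mul_of_nonneg_left hlv2 hE0.le
      rw [← mul_assoc, mul_inv_cancel₀ hE0.ne', one_mul] at h2
      calc (r-E*(B S S').re)^2 + 2*((r-E*(B S S').re)*(E^2-1))*r + (E^2-1)^2*‖S'‖^2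
          ≤ E * ((r-E*(B S S').re)^2*(B S S).re + 2*((r-E*(B S S').re)*(E^2-1))*(B S S').re
              + (E^2-1)^2*1) := h2
      _ = E*((r-E*(B S S').re)^2*(B S S).re + 2*((r-E*(B S S').re)*(E^2-1))*(B S S').re
              + (E^2-1)^2) := by ring
    have hfin := stmt2_arith E r (‖S'‖^2) ((B S S).re) ((B S S').re)
      hE1 hr0 hr2s hs_le hb2E hτr hquad
    rw [hns]
    linarith
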